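/- Let Σ* be a symmetric positive definite d×d real matrix, Σ a symmetric positive semidefinite d×d real matrix, m, m* ∈ ℝ^d, and set a = m − S(Σ*,Σ)m* and V = S(Σ*,Σ) − I_d. Then ‖a + Vm*‖² + tr(VΣ*V) = ‖m − m*‖² + tr(Σ) + tr(Σ*) − 2 tr((Σ*^{1/2} Σ Σ*^{1/2})^{1/2}). In particular, ‖φ_{μ*}(N(m,Σ))‖²_{(m*,Σ*)} equals the squared Wasserstein distance formula ‖m − m*‖² + tr(Σ + Σ* − 2(Σ*^{1/2}ΣΣ*^{1/2})^{1/2}). -/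

import Mathlib

open MeasureTheory Matrix Filter ProbabilityTheory

open Classical in
/-- The unique symmetric positive semidefinite square root of a positive semidefinite real
matrix (junk value `0` if the matrix is not positive semidefinite). -/
noncomputable def matSqrt {d : ℕ} (A : Matrix (Fin d) (Fin d) ℝ) : Matrix (Fin d) (Fin d) ℝ :=
  if h : A.PosSemidef then
    h.1.eigenvectorUnitary * diagonal (Real.sqrt ∘ h.1.eigenvalues) *
      (star h.1.eigenvectorUnitary : Matrix (Fin d) (Fin d) ℝ)
  else 0

/-- `S(Σ₁, Σ₂) = Σ₁^{-1/2} (Σ₁^{1/2} Σ₂ Σ₁^{1/2})^{1/2} Σ₁^{-1/2}`. -/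
noncomputable def Smat {d : ℕ} (S1 S2 : Matrix (Fin d) (Fin d) ℝ) : Matrix (Fin d) (Fin d) ℝ :=
  (matSqrt S1)⁻¹ * matSqrt (matSqrt S1 * S2 * matSqrt S1) * (matSqrt S1)⁻¹

open Classical in
/-- The Gaussian measure `N(m, Σ)` on `ℝ^d`, realized as the pushforward of a product of
standard real Gaussians under `x ↦ m + Σ^{1/2} x` (junk value `0` if `Σ` is not psd). -/
noncomputable def gaussianMeasure {d : ℕ} (m : Fin d → ℝ) (S : Matrix (Fin d) (Fin d) ℝ) :
    Measure (Fin d → ℝ) :=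
  if _h : S.PosSemidef then
    (Measure.pi fun _ : Fin d => gaussianReal 0 1).map (fun x => m + (matSqrt S).mulVec x)
  else 0

/-- Squared euclidean distance on `ℝ^d`. -/
def sqDist {d : ℕ} (x y : Fin d → ℝ) : ℝ := ∑ i, (x i - y i) ^ 2

/-- The 2-Wasserstein distance between two measures on `ℝ^d` (with the euclidean cost). -/
noncomputable def W2 {d : ℕ} (μ ν : Measure (Fin d → ℝ)) : ℝ :=
  Real.sqrt (⨅ π ∈ {π : Measure ((Fin d → ℝ) × (Fin d → ℝ)) |
      IsProbabilityMeasure π ∧ π.map Prod.fst = μ ∧ π.map Prod.snd = ν},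
    ∫⁻ p, ENNReal.ofReal (sqDist p.1 p.2) ∂π).toReal

/-- The inner product `⟨(a,V),(b,U)⟩_{(m*,Σ*)}` on `Ξ_d`. -/
noncomputable def xiInner {d : ℕ} (ms : Fin d → ℝ) (Ss : Matrix (Fin d) (Fin d) ℝ)
    (a : Fin d → ℝ) (V : Matrix (Fin d) (Fin d) ℝ)
    (b : Fin d → ℝ) (U : Matrix (Fin d) (Fin d) ℝ) : ℝ :=
  (a + V.mulVec ms) ⬝ᵥ (b + U.mulVec ms) + (V * Ss * U).trace

/-- The squared norm `‖(a,V)‖²_{(m*,Σ*)} = ‖a + V m*‖² + tr(V Σ* V)` on `Ξ_d`. -/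
noncomputable def xiNormSq {d : ℕ} (ms : Fin d → ℝ) (Ss : Matrix (Fin d) (Fin d) ℝ)
    (a : Fin d → ℝ) (V : Matrix (Fin d) (Fin d) ℝ) : ℝ :=
  (∑ i, (a i + V.mulVec ms i) ^ 2) + (V * Ss * V).trace

/-- The norm `‖(a,V)‖_{(m*,Σ*)}` on `Ξ_d`. -/
noncomputable def xiNorm {d : ℕ} (ms : Fin d → ℝ) (Ss : Matrix (Fin d) (Fin d) ℝ)
    (a : Fin d → ℝ) (V : Matrix (Fin d) (Fin d) ℝ) : ℝ :=
  Real.sqrt (xiNormSq ms Ss a V)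

theorem matSqrt_mul_self' {d : ℕ} {A : Matrix (Fin d) (Fin d) ℝ} (h : A.PosSemidef) :
    matSqrt A * matSqrt A = A := by
  classical
  rw [matSqrt, dif_pos h]
  have hU : (star h.1.eigenvectorUnitary : Matrix (Fin d) (Fin d) ℝ) *
      (h.1.eigenvectorUnitary : Matrix (Fin d) (Fin d) ℝ) = 1 := by simp
  have hD : diagonal (Real.sqrt ∘ h.1.eigenvalues) * diagonal (Real.sqrt ∘ h.1.eigenvalues)
      = diagonal h.1.eigenvalues := by
    rw [diagonal_mul_diagonal]
    congr 1; funext i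
    exact Real.mul_self_sqrt (h.eigenvalues_nonneg i)
  calc _ = (h.1.eigenvectorUnitary : Matrix (Fin d) (Fin d) ℝ) *
        diagonal (Real.sqrt ∘ h.1.eigenvalues) *
        ((star h.1.eigenvectorUnitary : Matrix (Fin d) (Fin d) ℝ) *
        (h.1.eigenvectorUnitary : Matrix (Fin d) (Fin d) ℝ)) *
        diagonal (Real.sqrt ∘ h.1.eigenvalues) *
        (star h.1.eigenvectorUnitary : Matrix (Fin d) (Fin d) ℝ) := by
          simp only [Matrix.mul_assoc]
    _ = A := by
      rw [hU, Matrix.mul_one, Matrix.mul_assoc _ (diagonal _) (diagonal _), hD]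
      conv_rhs => rw [h.1.spectral_theorem]
      simp [Unitary.conjStarAlgAut_apply, Matrix.mul_assoc]

theorem matSqrt_conjTranspose' {d : ℕ} {A : Matrix (Fin d) (Fin d) ℝ} (h : A.PosSemidef) :
    (matSqrt A)ᴴ = matSqrt A := by
  classical
  rw [matSqrt, dif_pos h]
  rw [conjTranspose_mul, conjTranspose_mul, ← Matrix.star_eq_conjTranspose,
    star_star, diagonal_conjTranspose, ← Matrix.star_eq_conjTranspose, Matrix.mul_assoc]
  congr 2

/-- With `a = m − S(Σ*,Σ)m*` and `V = S(Σ*,Σ) − I`, one has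
`‖a + Vm*‖² + tr(VΣ*V) = ‖m − m*‖² + tr(Σ) + tr(Σ*) − 2 tr((Σ*^{1/2} Σ Σ*^{1/2})^{1/2})`;
i.e. `‖φ_{μ*}(N(m,Σ))‖²_{(m*,Σ*)}` equals the squared Wasserstein distance formula. -/
theorem stmt_2 {d : ℕ} (m ms : Fin d → ℝ) (S Ss : Matrix (Fin d) (Fin d) ℝ)
    (hSs : Ss.PosDef) (hS : S.PosSemidef) :
    xiNormSq ms Ss (m - (Smat Ss S).mulVec ms) (Smat Ss S - 1)
      = (∑ i, (m i - ms i) ^ 2) + S.trace + Ss.trace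
        - 2 * (matSqrt (matSqrt Ss * S * matSqrt Ss)).trace := by
  set R := matSqrt Ss with hRdef
  have hRR : R * R = Ss := by exact matSqrt_mul_self' hSs.posSemidef
  have hRu : IsUnit R.det := by
    have : R.det * R.det = Ss.det := by rw [← det_mul, hRR]
    have hpos : (0:ℝ) < Ss.det := hSs.det_pos
    exact isUnit_iff_ne_zero.2 fun h => by simp [h] at this; exact absurd this.symm (ne_of_gt hpos)
  have hRinv : R⁻¹ * R = 1 := nonsing_inv_mul R hRu
  have hRinv' : R * R⁻¹ = 1 := mul_nonsing_inv R hRu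
  have hRSR : (R * S * R).PosSemidef := by
    have := hS.mul_mul_conjTranspose_same R
    rwa [show Rᴴ = R from by exact matSqrt_conjTranspose' hSs.posSemidef] at this
  set M := matSqrt (R * S * R) with hMdef
  have hMM : M * M = R * S * R := by exact matSqrt_mul_self' hRSR
  set T := Smat Ss S with hTdef
  have hT : T = R⁻¹ * M * R⁻¹ := rfl
  -- vector part
  have hvec : ∀ i, (m - T.mulVec ms) i + (T - 1).mulVec ms i = m i - ms i := by
    intro i
    simp [Matrix.sub_mulVec, Matrix.one_mulVec, Pi.sub_apply]
  -- trace facts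
  have hTSsT : T * Ss * T = R⁻¹ * (M * M) * R⁻¹ := by
    rw [hT, ← hRR]
    rw [show R⁻¹ * M * R⁻¹ * (R * R) * (R⁻¹ * M * R⁻¹)
        = R⁻¹ * M * ((R⁻¹ * R) * (R * R⁻¹)) * M * R⁻¹ by noncomm_ring]
    rw [hRinv, hRinv']
    noncomm_ring
  have htr1 : (T * Ss * T).trace = S.trace := by
    rw [hTSsT, hMM]
    rw [show R⁻¹ * (R * S * R) * R⁻¹ = (R⁻¹ * R) * S * (R * R⁻¹) by noncomm_ring,
      hRinv, hRinv', one_mul, mul_one]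
  have htr2 : (T * Ss).trace = M.trace := by
    rw [hT, ← hRR,
      show R⁻¹ * M * R⁻¹ * (R * R) = R⁻¹ * M * ((R⁻¹ * R) * R) by noncomm_ring,
      hRinv, one_mul]
    rw [Matrix.mul_assoc, Matrix.trace_mul_comm, Matrix.mul_assoc, hRinv', mul_one]
  have htr3 : (Ss * T).trace = M.trace := by
    rw [Matrix.trace_mul_comm, htr2]
  -- expand
  unfold xiNormSq
  have hexp : (T - 1) * Ss * (T - 1) = T * Ss * T - T * Ss - Ss * T + Ss := by
    noncomm_ring
  rw [hexp]
  simp only [Matrix.trace_add, Matrix.trace_sub, htr1, htr2, htr3]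
  have : ∑ i, ((m - T.mulVec ms) i + (T - 1).mulVec ms i) ^ 2 = ∑ i, (m i - ms i) ^ 2 := by
    exact Finset.sum_congr rfl fun i _ => by rw [hvec i]
  rw [this]
  ring
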